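/- If 0 ≤ f₁ ≤ f₂ pointwise, f₁ and f₂ are continuous on [t₀,∞), and f₂ is recursively integrable, then f₁ is recursively integrable. -/

import Mathlib

open Set

/-- `f` is recursively integrable on `[t₀, ∞)`: for some `t₁ ≥ t₀`, the differential
equation `-g′(x) = g(x)² + f(x)` has a nonnegative solution `g` on `[t₁, ∞)`. -/
def RecInt (t₀ : ℝ) (f : ℝ → ℝ) : Prop :=
  ∃ t₁ : ℝ, t₀ ≤ t₁ ∧ ∃ g : ℝ → ℝ, (∀ x, t₁ ≤ x → 0 ≤ g x) ∧
    ∀ x, t₁ ≤ x → HasDerivWithinAt g (-(g x ^ 2 + f x)) (Set.Ici t₁) x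

/-- Comparison: if `0 ≤ f₁ ≤ f₂` and `f₂` is recursively integrable, so is `f₁`. -/
theorem recInt_of_le (t₀ : ℝ) (f₁ f₂ : ℝ → ℝ)
    (hf₁c : ContinuousOn f₁ (Set.Ici t₀)) (hf₂c : ContinuousOn f₂ (Set.Ici t₀))
    (h0 : ∀ x, t₀ ≤ x → 0 ≤ f₁ x) (hle : ∀ x, t₀ ≤ x → f₁ x ≤ f₂ x)
    (hrec : RecInt t₀ f₂) : RecInt t₀ f₁ := by
  obtain ⟨t₁, ht01, g₂, hg₂0, hg₂'⟩ := hrec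
  set M : ℝ := g₂ t₁ with hMdef
  have hM : 0 ≤ M := hg₂0 t₁ le_rfl
  set φ : ℝ → ℝ := fun y => min (max y 0) M with hφdef
  set v : ℝ → ℝ → ℝ := fun x y => -((min (max y 0) M) ^ 2 + f₁ x) with hvdef
  have hφ0 : ∀ y, 0 ≤ φ y := fun y => le_min (le_max_right _ _) hM
  have hφM : ∀ y, φ y ≤ M := fun y => min_le_right _ _
  have hφeq : ∀ y, 0 ≤ y → y ≤ M → φ y = y := by
    intro y h1 h2
    simp [hφdef, max_eq_left h1, min_eq_left h2]
  have hφmono : Monotone φ := fun a b hab =>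
    min_le_min (max_le_max hab le_rfl) le_rfl
  have hφlip : ∀ a b : ℝ, |φ a - φ b| ≤ |a - b| := by
    intro a b
    calc |φ a - φ b| ≤ max |max a 0 - max b 0| |M - M| := abs_min_sub_min_le_max _ _ _ _
    _ ≤ |a - b| := by
        rw [sub_self, abs_zero]
        exact max_le (abs_max_sub_max_le_abs _ _ _) (abs_nonneg _)
  set K : NNReal := (2 * M).toNNReal with hKdef
  have hKcoe : (K : ℝ) = 2 * M := Real.coe_toNNReal _ (by linarith)
  have hvlip : ∀ t, LipschitzWith K (v t) := by
    intro t
    apply LipschitzWith.of_dist_le_mul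
    intro a b
    have h1 : v t a - v t b = (φ b - φ a) * (φ b + φ a) := by
      simp only [hvdef, hφdef]; ring
    have h2 : |φ b + φ a| ≤ 2 * M := by
      rw [abs_of_nonneg (by positivity)]
      have := hφM a; have := hφM b; linarith
    rw [Real.dist_eq, Real.dist_eq, h1, abs_mul, hKcoe]
    calc |φ b - φ a| * |φ b + φ a| ≤ |b - a| * (2 * M) :=
          mul_le_mul (hφlip b a) h2 (abs_nonneg _) (abs_nonneg _)
    _ = 2 * M * |a - b| := by rw [abs_sub_comm]; ring
  have hIci : Ici t₁ ⊆ Ici t₀ := Ici_subset_Ici.2 ht01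
  have hf₁0 : ∀ x, t₁ ≤ x → 0 ≤ f₁ x := fun x hx => h0 x (ht01.trans hx)
  have hg₂cont : ContinuousOn g₂ (Ici t₁) :=
    fun x hx => (hg₂' x hx).continuousWithinAt
  have hg₂anti : AntitoneOn g₂ (Ici t₁) := by
    apply antitoneOn_of_deriv_nonpos (convex_Ici t₁) hg₂cont
    · intro x hx
      rw [interior_Ici] at hx
      exact ((hg₂' x (le_of_lt hx)).hasDerivAt
        (Ici_mem_nhds hx)).differentiableAt.differentiableWithinAt
    · intro x hx
      rw [interior_Ici] at hx
      have hd := ((hg₂' x (le_of_lt hx)).hasDerivAt (Ici_mem_nhds hx)).deriv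
      rw [hd]
      have h1 : 0 ≤ f₂ x := (h0 x (ht01.trans hx.le)).trans (hle x (ht01.trans hx.le))
      nlinarith [sq_nonneg (g₂ x)]
  have hg₂le : ∀ x, t₁ ≤ x → g₂ x ≤ M :=
    fun x hx => hg₂anti self_mem_Ici hx hx
  -- existence of a bounded solution of the truncated equation on each `Icc t₁ T`
  have main : ∀ T, t₁ ≤ T → ∃ α : ℝ → ℝ, α t₁ = M ∧
      (∀ x ∈ Icc t₁ T, g₂ x ≤ α x ∧ α x ≤ M) ∧
      (∀ x ∈ Icc t₁ T, HasDerivWithinAt α (v x (α x)) (Icc t₁ T) x) := by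
    intro T h1T
    obtain ⟨F, hF⟩ := isCompact_Icc.exists_bound_of_continuousOn
      (hf₁c.mono ((Icc_subset_Ici_self).trans hIci) : ContinuousOn f₁ (Icc t₁ T))
    have hF0 : 0 ≤ F := (norm_nonneg _).trans (hF t₁ ⟨le_rfl, h1T⟩)
    set C : ℝ := M ^ 2 + F with hCdef
    have hC : 0 ≤ C := by positivity
    set R : ℝ := C * (T - t₁) with hRdef
    have hpl : IsPicardLindelof v (tmin := t₁) (tmax := T) ⟨t₁, left_mem_Icc.2 h1T⟩ M
        R.toNNReal 0 C.toNNReal K := by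
      constructor
      · exact fun t _ => (hvlip t).lipschitzOnWith
      · intro y _
        show ContinuousOn (fun t => -((min (max y 0) M) ^ 2 + f₁ t)) (Icc t₁ T)
        exact (continuousOn_const.add
          (hf₁c.mono ((Icc_subset_Ici_self).trans hIci))).neg
      · intro t ht y _
        have h1 : 0 ≤ f₁ t := hf₁0 t ht.1
        have h2 : f₁ t ≤ F := (le_abs_self _).trans (hF t ht)
        have h3 : 0 ≤ φ y := hφ0 y
        have h4 : φ y ≤ M := hφM y
        have : v t y = -((φ y) ^ 2 + f₁ t) := rfl
        rw [Real.coe_toNNReal _ hC]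
        rw [this, Real.norm_eq_abs, abs_neg, abs_of_nonneg (by positivity)]
        nlinarith
      · show (C.toNNReal : ℝ) * max (T - t₁) (t₁ - t₁) ≤ (R.toNNReal : ℝ) - ((0 : NNReal) : ℝ)
        rw [Real.coe_toNNReal _ hC, Real.coe_toNNReal _ (mul_nonneg hC (by linarith)),
          NNReal.coe_zero, sub_zero]
        rw [sub_self, max_eq_left (by linarith : (0:ℝ) ≤ T - t₁)]
    obtain ⟨α, hα0, hα'⟩ := hpl.exists_eq_forall_mem_Icc_hasDerivWithinAt₀
    replace hα0 : α t₁ = M := hα0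
    have hαcont : ContinuousOn α (Icc t₁ T) :=
      fun x hx => (hα' x hx).continuousWithinAt
    have hαAt : ∀ z ∈ Ioo t₁ T, HasDerivAt α (v z (α z)) z := fun z hz =>
      (hα' z (Ioo_subset_Icc_self hz)).hasDerivAt (Icc_mem_nhds hz.1 hz.2)
    have hαanti : AntitoneOn α (Icc t₁ T) := by
      apply antitoneOn_of_deriv_nonpos (convex_Icc t₁ T) hαcont
      · intro z hz
        rw [interior_Icc] at hz
        exact (hαAt z hz).differentiableAt.differentiableWithinAt
      · intro z hz
        rw [interior_Icc] at hz
        rw [(hαAt z hz).deriv]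
        have h1 : 0 ≤ f₁ z := hf₁0 z hz.1.le
        have : v z (α z) = -((φ (α z)) ^ 2 + f₁ z) := rfl
        rw [this]
        nlinarith [sq_nonneg (φ (α z))]
    have hup : ∀ x ∈ Icc t₁ T, α x ≤ M := by
      intro x hx
      have := hαanti (left_mem_Icc.2 h1T) hx hx.1
      rwa [hα0] at this
    have hlow : ∀ x ∈ Icc t₁ T, g₂ x ≤ α x := by
      by_contra hcon
      push_neg at hcon
      obtain ⟨x₂, hx₂, hd₂⟩ := hcon
      set d : ℝ → ℝ := fun x => g₂ x - α x with hddef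
      have hd₂' : 0 < d x₂ := by simp [hddef]; linarith
      have hdcont : ContinuousOn d (Icc t₁ T) :=
        (hg₂cont.mono Icc_subset_Ici_self).sub hαcont
      set S : Set ℝ := Icc t₁ x₂ ∩ d ⁻¹' (Iic 0) with hSdef
      have hSclosed : IsClosed S :=
        (hdcont.mono (Icc_subset_Icc_right hx₂.2)).preimage_isClosed_of_isClosed
          isClosed_Icc isClosed_Iic
      have ht₁S : t₁ ∈ S := by
        constructor
        · exact left_mem_Icc.2 hx₂.1
        · simp [hddef, hα0, hMdef]
      have hSbdd : BddAbove S := ⟨x₂, fun z hz => hz.1.2⟩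
      set x₁ : ℝ := sSup S with hx₁def
      have hx₁S : x₁ ∈ S := hSclosed.csSup_mem ⟨t₁, ht₁S⟩ hSbdd
      have hx₁mem : x₁ ∈ Icc t₁ x₂ := hx₁S.1
      have hx₁lt : x₁ < x₂ := by
        rcases lt_or_eq_of_le hx₁mem.2 with h | h
        · exact h
        · exfalso; have := hx₁S.2; rw [h] at this; exact absurd hd₂' (by simpa using this)
      have hdpos : ∀ z ∈ Ioc x₁ x₂, 0 < d z := by
        intro z hz
        by_contra hzn
        push_neg at hzn
        have hzS : z ∈ S := ⟨⟨hx₁mem.1.trans hz.1.le, hz.2⟩, hzn⟩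
        exact absurd (le_csSup hSbdd hzS) (not_le.2 hz.1)
      have hdanti : AntitoneOn d (Icc x₁ x₂) := by
        apply antitoneOn_of_deriv_nonpos (convex_Icc x₁ x₂)
          (hdcont.mono (Icc_subset_Icc hx₁mem.1 hx₂.2))
        · intro z hz
          rw [interior_Icc] at hz
          have hz' : z ∈ Ioo t₁ T :=
            ⟨hx₁mem.1.trans_lt hz.1, hz.2.trans_le hx₂.2⟩
          exact (((hg₂' z hz'.1.le).hasDerivAt (Ici_mem_nhds hz'.1)).sub
            (hαAt z hz')).differentiableAt.differentiableWithinAt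
        · intro z hz
          rw [interior_Icc] at hz
          have hz' : z ∈ Ioo t₁ T :=
            ⟨hx₁mem.1.trans_lt hz.1, hz.2.trans_le hx₂.2⟩
          have hder : HasDerivAt d (-(g₂ z ^ 2 + f₂ z) - v z (α z)) z :=
            ((hg₂' z hz'.1.le).hasDerivAt (Ici_mem_nhds hz'.1)).sub (hαAt z hz')
          rw [hder.deriv]
          have hdz : 0 < d z := hdpos z ⟨hz.1, hz.2.le⟩
          have hαlt : α z < g₂ z := by simp [hddef] at hdz; linarith
          have hg₂z0 : 0 ≤ g₂ z := hg₂0 z hz'.1.le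
          have hg₂zM : g₂ z ≤ M := hg₂le z hz'.1.le
          have hφα : φ (α z) ≤ g₂ z := by
            calc φ (α z) ≤ φ (g₂ z) := hφmono hαlt.le
            _ = g₂ z := hφeq _ hg₂z0 hg₂zM
          have hφα0 : 0 ≤ φ (α z) := hφ0 _
          have hsq : (φ (α z)) ^ 2 ≤ g₂ z ^ 2 := by nlinarith
          have hf : f₁ z ≤ f₂ z := hle z (ht01.trans hz'.1.le)
          have : v z (α z) = -((φ (α z)) ^ 2 + f₁ z) := rfl
          rw [this]
          nlinarith
      have : d x₂ ≤ d x₁ :=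
        hdanti (left_mem_Icc.2 hx₁lt.le) (right_mem_Icc.2 hx₁lt.le) hx₁lt.le
      have hdx₁ : d x₁ ≤ 0 := hx₁S.2
      linarith
    exact ⟨α, hα0, fun x hx => ⟨hlow x hx, hup x hx⟩, hα'⟩
  -- choose a solution on each `Icc t₁ (t₁ + n)`
  have hTn : ∀ n : ℕ, t₁ ≤ t₁ + n := fun n => le_add_of_nonneg_right n.cast_nonneg
  choose sol hsol0 hsolb hsol' using fun n : ℕ => main (t₁ + n) (hTn n)
  -- derivative within `Ici t` for the uniqueness lemma
  have hconv : ∀ (T : ℝ) (α : ℝ → ℝ),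
      (∀ x ∈ Icc t₁ T, HasDerivWithinAt α (v x (α x)) (Icc t₁ T) x) →
      ∀ t ∈ Ico t₁ T, HasDerivWithinAt α (v t (α t)) (Ici t) t := by
    intro T α hα t ht
    exact ((hα t (Ico_subset_Icc_self ht)).mono
      (Icc_subset_Icc_left ht.1)).mono_of_mem_nhdsWithin
      (Icc_mem_nhdsGE_of_mem ⟨le_rfl, ht.2⟩)
  have huniq : ∀ m n : ℕ, m ≤ n → EqOn (sol m) (sol n) (Icc t₁ (t₁ + m)) := by
    intro m n hmn
    have hmn' : (t₁ + m : ℝ) ≤ t₁ + n := by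
      have : (m : ℝ) ≤ n := Nat.cast_le.2 hmn
      linarith
    apply ODE_solution_unique hvlip
      (fun x hx => (hsol' m x hx).continuousWithinAt)
      (hconv _ _ (hsol' m))
      (ContinuousOn.mono (s := Icc t₁ (t₁ + (n:ℝ)))
        (fun x hx => (hsol' n x hx).continuousWithinAt) (Icc_subset_Icc_right hmn'))
      (fun t ht => hconv _ _ (hsol' n) t ⟨ht.1, ht.2.trans_le hmn'⟩)
    rw [hsol0 m, hsol0 n]
  set g : ℝ → ℝ := fun x => sol (⌈x - t₁⌉₊ + 1) x with hgdef
  have hxmem : ∀ x, t₁ ≤ x → x ∈ Icc t₁ (t₁ + (⌈x - t₁⌉₊ + 1 : ℕ)) := by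
    intro x hx
    refine ⟨hx, ?_⟩
    have h1 : x - t₁ ≤ (⌈x - t₁⌉₊ : ℝ) := Nat.le_ceil _
    push_cast
    linarith
  have key : ∀ (n : ℕ) (z : ℝ), z ∈ Icc t₁ (t₁ + n) → g z = sol n z := by
    intro n z hz
    have hz1 : z ∈ Icc t₁ (t₁ + (⌈z - t₁⌉₊ + 1 : ℕ)) := hxmem z hz.1
    rcases le_total (⌈z - t₁⌉₊ + 1) n with h | h
    · exact huniq _ n h hz1
    · exact (huniq n _ h hz).symm
  refine ⟨t₁, ht01, g, ?_, ?_⟩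
  · intro x hx
    have h1 := key _ x (hxmem x hx)
    calc (0:ℝ) ≤ g₂ x := hg₂0 x hx
    _ ≤ sol (⌈x - t₁⌉₊ + 1) x := (hsolb _ x (hxmem x hx)).1
    _ = g x := (key _ x (hxmem x hx)).symm
  · intro x hx
    set N : ℕ := ⌈x - t₁⌉₊ + 1 with hNdef
    have hxN : x ∈ Icc t₁ (t₁ + N) := hxmem x hx
    have hlt : x < t₁ + N := by
      have h1 : x - t₁ ≤ (⌈x - t₁⌉₊ : ℝ) := Nat.le_ceil _
      have : ((⌈x - t₁⌉₊ : ℝ)) < N := by rw [hNdef]; push_cast; linarith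
      linarith
    have h1 : HasDerivWithinAt (sol N) (v x (sol N x)) (Icc t₁ (t₁ + N)) x :=
      hsol' N x hxN
    have hmem : Icc t₁ (t₁ + N) ∈ nhdsWithin x (Ici t₁) := by
      rw [← Ici_inter_Iic]
      exact inter_mem_nhdsWithin _ (Iic_mem_nhds hlt)
    have h2 : HasDerivWithinAt (sol N) (v x (sol N x)) (Ici t₁) x :=
      h1.mono_of_mem_nhdsWithin hmem
    have h3 : g =ᶠ[nhdsWithin x (Ici t₁)] sol N :=
      Filter.eventuallyEq_of_mem hmem (fun z hz => key N z hz)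
    have h4 : HasDerivWithinAt g (v x (sol N x)) (Ici t₁) x :=
      h2.congr_of_eventuallyEq h3 (key N x hxN)
    have hb := hsolb N x hxN
    have hval : v x (sol N x) = -(g x ^ 2 + f₁ x) := by
      have h5 : φ (sol N x) = sol N x :=
        hφeq _ ((hg₂0 x hx).trans hb.1) hb.2
      have h6 : g x = sol N x := key N x hxN
      show -((φ (sol N x)) ^ 2 + f₁ x) = -(g x ^ 2 + f₁ x)
      rw [h5, h6]
    rwa [hval] at h4
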